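/- arXiv:1812.02064 — 13 statements merged into one kernel-verified Lean document; each statement's English description precedes it below -/
import Mathlib

section
/- Let S ⊆ ℕ² be a good semigroup that is local (the only element of S with a zero component is (0,0)). Then S has a smallest nonzero element with respect to the componentwise partial order, i.e., there exists e ∈ S, e ≠ (0,0), such that e ≤ α for every nonzero α ∈ S. -/
/-- A local good semigroup `S ⊆ ℕ²` has a smallest nonzero element with respect
to the componentwise partial order. -/
theorem exists_min_nonzero (S : Set (ℕ × ℕ))
    (hzero : ((0, 0) : ℕ × ℕ) ∈ S)
    (hadd : ∀ a ∈ S, ∀ b ∈ S, a + b ∈ S)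
    (hG1 : ∀ a ∈ S, ∀ b ∈ S, ((min a.1 b.1, min a.2 b.2) : ℕ × ℕ) ∈ S)
    (hG2fst : ∀ a ∈ S, ∀ b ∈ S, a.1 = b.1 → a.2 ≠ b.2 →
      ∃ d ∈ S, a.1 < d.1 ∧ d.2 = min a.2 b.2)
    (hG2snd : ∀ a ∈ S, ∀ b ∈ S, a.2 = b.2 → a.1 ≠ b.1 →
      ∃ d ∈ S, a.2 < d.2 ∧ d.1 = min a.1 b.1)
    (hG3 : ∃ c : ℕ × ℕ, ∀ b : ℕ × ℕ, c + b ∈ S)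
    (hlocal : ∀ p ∈ S, (p.1 = 0 ∨ p.2 = 0) → p = (0, 0)) :
    ∃ e ∈ S, e ≠ (0, 0) ∧ ∀ p ∈ S, p ≠ (0, 0) → e ≤ p := by
  -- there is a nonzero element
  obtain ⟨c, hc⟩ := hG3
  have hnz : ∃ p ∈ S, p ≠ (0, 0) := by
    refine ⟨c + (1, 1), hc _, ?_⟩
    intro h
    have : (c + (1, 1)).1 = 0 := by rw [h]
    simp [Prod.fst_add] at this
  obtain ⟨q, hqS, hq0⟩ := hnz
  set A : Set ℕ := {n | ∃ p ∈ S, p ≠ (0, 0) ∧ p.1 = n} with hA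
  set B : Set ℕ := {n | ∃ p ∈ S, p ≠ (0, 0) ∧ p.2 = n} with hB
  have hAne : A.Nonempty := ⟨q.1, q, hqS, hq0, rfl⟩
  have hBne : B.Nonempty := ⟨q.2, q, hqS, hq0, rfl⟩
  obtain ⟨a, haS, ha0, ha1⟩ : ∃ p ∈ S, p ≠ (0, 0) ∧ p.1 = sInf A :=
    Nat.sInf_mem hAne
  obtain ⟨b, hbS, hb0, hb2⟩ : ∃ p ∈ S, p ≠ (0, 0) ∧ p.2 = sInf B :=
    Nat.sInf_mem hBne
  have hmin1 : min a.1 b.1 = sInf A := by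
    rw [ha1]
    exact min_eq_left (Nat.sInf_le ⟨b, hbS, hb0, rfl⟩)
  have hmin2 : min a.2 b.2 = sInf B := by
    rw [hb2]
    exact min_eq_right (Nat.sInf_le ⟨a, haS, ha0, rfl⟩)
  refine ⟨(sInf A, sInf B), ?_, ?_, ?_⟩
  · have := hG1 a haS b hbS
    rwa [hmin1, hmin2] at this
  · intro h
    have h1 : sInf A = 0 := congrArg Prod.fst h
    exact ha0 (hlocal a haS (Or.inl (ha1.trans h1)))
  · intro p hpS hp0
    exact ⟨Nat.sInf_le ⟨p, hpS, hp0, rfl⟩, Nat.sInf_le ⟨p, hpS, hp0, rfl⟩⟩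
end

section
/- Let S ⊆ ℕ² be a local good semigroup with minimal nonzero element e. Then e + S is a good ideal of S: it is a relative ideal contained in S and satisfies properties (G1) and (G2). -/
/-- Points strictly above `b` on the same vertical line. -/
def Delta1 (b : ℤ × ℤ) : Set (ℤ × ℤ) := {d | d.1 = b.1 ∧ b.2 < d.2}

/-- Points strictly to the right of `b` on the same horizontal line. -/
def Delta2 (b : ℤ × ℤ) : Set (ℤ × ℤ) := {d | d.2 = b.2 ∧ b.1 < d.1}

/-- `Delta b = Delta1 b ∪ Delta2 b`. -/
def Delta (b : ℤ × ℤ) : Set (ℤ × ℤ) := Delta1 b ∪ Delta2 b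

/-- A good semigroup `S ⊆ ℕ² ⊆ ℤ²`. -/
structure GoodSemigroup (S : Set (ℤ × ℤ)) : Prop where
  nonneg : ∀ p ∈ S, 0 ≤ p.1 ∧ 0 ≤ p.2
  zero_mem : ((0, 0) : ℤ × ℤ) ∈ S
  add_mem : ∀ a ∈ S, ∀ b ∈ S, a + b ∈ S
  inf_mem : ∀ a ∈ S, ∀ b ∈ S, ((min a.1 b.1, min a.2 b.2) : ℤ × ℤ) ∈ S
  g2_fst : ∀ a ∈ S, ∀ b ∈ S, a.1 = b.1 → a.2 ≠ b.2 →
      ∃ d ∈ S, a.1 < d.1 ∧ d.2 = min a.2 b.2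
  g2_snd : ∀ a ∈ S, ∀ b ∈ S, a.2 = b.2 → a.1 ≠ b.1 →
      ∃ d ∈ S, a.2 < d.2 ∧ d.1 = min a.1 b.1
  g3 : ∃ c : ℤ × ℤ, ∀ z : ℤ × ℤ, c ≤ z → z ∈ S

/-- `S` is local: `(0,0)` is the only element with a zero component. -/
def IsLocal (S : Set (ℤ × ℤ)) : Prop := ∀ p ∈ S, (p.1 = 0 ∨ p.2 = 0) → p = (0, 0)

/-- `e` is the smallest nonzero element of `S`. -/
def IsMinNonzero (S : Set (ℤ × ℤ)) (e : ℤ × ℤ) : Prop :=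
  e ∈ S ∧ e ≠ (0, 0) ∧ ∀ p ∈ S, p ≠ (0, 0) → e ≤ p

/-- `c` is the conductor of `S`: the minimal element with `c + ℕ² ⊆ S`. -/
def IsConductor (S : Set (ℤ × ℤ)) (c : ℤ × ℤ) : Prop :=
  (∀ z : ℤ × ℤ, c ≤ z → z ∈ S) ∧
  ∀ c' : ℤ × ℤ, (∀ z : ℤ × ℤ, c' ≤ z → z ∈ S) → c ≤ c'

/-- The Apéry set of `S` with respect to `e`. -/
def Ap (S : Set (ℤ × ℤ)) (e : ℤ × ℤ) : Set (ℤ × ℤ) := {a ∈ S | a - e ∉ S}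

/-- `S` is symmetric with respect to `γ = c - (1,1)`. -/
def IsSymmetric (S : Set (ℤ × ℤ)) (γ : ℤ × ℤ) : Prop :=
  ∀ a : ℤ × ℤ, a ∈ S ↔ Delta (γ - a) ∩ S = ∅

/-- `a` is an absolute element of `S`. -/
def Absolute (S : Set (ℤ × ℤ)) (a : ℤ × ℤ) : Prop := a ∈ S ∧ Delta a ∩ S = ∅

/-- The set `e + S`. -/
def shiftSet (S : Set (ℤ × ℤ)) (e : ℤ × ℤ) : Set (ℤ × ℤ) := {a | ∃ s ∈ S, a = e + s}

/-- `e + S` is a good ideal of `S`: an ideal contained in `S` satisfying (G1) and (G2). -/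
theorem shift_good_ideal (S : Set (ℤ × ℤ)) (hS : GoodSemigroup S) (hloc : IsLocal S)
    (e : ℤ × ℤ) (he : IsMinNonzero S e) :
    shiftSet S e ⊆ S ∧
    (∀ a ∈ shiftSet S e, ∀ s ∈ S, a + s ∈ shiftSet S e) ∧
    (∀ a ∈ shiftSet S e, ∀ b ∈ shiftSet S e,
      ((min a.1 b.1, min a.2 b.2) : ℤ × ℤ) ∈ shiftSet S e) ∧
    (∀ a ∈ shiftSet S e, ∀ b ∈ shiftSet S e, a.1 = b.1 → a.2 ≠ b.2 →
      ∃ d ∈ shiftSet S e, a.1 < d.1 ∧ d.2 = min a.2 b.2) ∧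
    (∀ a ∈ shiftSet S e, ∀ b ∈ shiftSet S e, a.2 = b.2 → a.1 ≠ b.1 →
      ∃ d ∈ shiftSet S e, a.2 < d.2 ∧ d.1 = min a.1 b.1) := by
  refine ⟨?_, ?_, ?_, ?_, ?_⟩
  · rintro a ⟨s, hs, rfl⟩
    exact hS.add_mem e he.1 s hs
  · rintro a ⟨s, hs, rfl⟩ t ht
    exact ⟨s + t, hS.add_mem s hs t ht, by ring⟩
  · rintro a ⟨s, hs, rfl⟩ b ⟨t, ht, rfl⟩
    refine ⟨(min s.1 t.1, min s.2 t.2), hS.inf_mem s hs t ht, ?_⟩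
    simp [Prod.ext_iff, Prod.add_def]
  · rintro a ⟨s, hs, rfl⟩ b ⟨t, ht, rfl⟩ h1 h2
    simp [Prod.add_def] at h1 h2
    obtain ⟨d, hd, hd1, hd2⟩ := hS.g2_fst s hs t ht (by omega) (by omega)
    refine ⟨e + d, ⟨d, hd, rfl⟩, ?_, ?_⟩ <;> simp [Prod.add_def] <;> omega
  · rintro a ⟨s, hs, rfl⟩ b ⟨t, ht, rfl⟩ h1 h2
    simp [Prod.add_def] at h1 h2
    obtain ⟨d, hd, hd1, hd2⟩ := hS.g2_snd s hs t ht (by omega) (by omega)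
    refine ⟨e + d, ⟨d, hd, rfl⟩, ?_, ?_⟩ <;> simp [Prod.add_def] <;> omega
end

section
/- Let S ⊆ ℕ² be a local good semigroup with minimal nonzero element e, and let α ∈ Ap(S). If there exists β ∈ (e + S) ∩ Δ₁(α), then Δ₂(α) ∩ S ⊆ Ap(S). Here Δ₁(α) = {β ∈ ℤ² : β₁ = α₁, β₂ > α₂} and Δ₂(α) = {β ∈ ℤ² : β₂ = α₂, β₁ > α₁}. -/
/-- If `α ∈ Ap(S)` and some `β ∈ (e + S) ∩ Δ₁(α)`, then `Δ₂(α) ∩ S ⊆ Ap(S)`. -/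
theorem delta2_subset_ap (S : Set (ℤ × ℤ)) (hS : GoodSemigroup S) (hloc : IsLocal S)
    (e : ℤ × ℤ) (he : IsMinNonzero S e)
    (α : ℤ × ℤ) (hα : α ∈ Ap S e)
    (hβ : ∃ β ∈ shiftSet S e, β ∈ Delta1 α) :
    Delta2 α ∩ S ⊆ Ap S e := by
  rintro θ ⟨⟨hθ2, hθ1⟩, hθS⟩
  refine ⟨hθS, fun hcon => ?_⟩
  obtain ⟨β, ⟨s, hsS, hβeq⟩, hβ1, hβ2⟩ := hβ
  obtain ⟨hαS, hαAp⟩ := hα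
  apply hαAp
  have h := hS.inf_mem _ hcon _ hsS
  have h1 : s.1 = β.1 - e.1 := by rw [hβeq]; simp
  have h2 : s.2 = β.2 - e.2 := by rw [hβeq]; simp
  have heq : ((min (θ - e).1 s.1, min (θ - e).2 s.2) : ℤ × ℤ) = α - e := by
    have : (θ - e).1 = θ.1 - e.1 := rfl
    have : (θ - e).2 = θ.2 - e.2 := rfl
    apply Prod.ext <;> simp [Prod.fst_sub, Prod.snd_sub] <;> omega
  rwa [heq] at h
end

section
/- Let S ⊆ ℕ² be a local good semigroup with minimal nonzero element e. Suppose α ∈ ℕ² is such that Δ₁(α) ∩ S ∩ (e + S) is finite and nonempty, and let δ be its maximum. Then Δ(δ) ∩ S ⊆ Ap(S), where Δ(δ) = Δ₁(δ) ∪ Δ₂(δ). -/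
/-- If `Δ₁(α) ∩ S ∩ (e + S)` is finite nonempty with maximum `δ`, then
`Δ(δ) ∩ S ⊆ Ap(S)`. -/
theorem delta_max_subset_ap (S : Set (ℤ × ℤ)) (hS : GoodSemigroup S) (hloc : IsLocal S)
    (e : ℤ × ℤ) (he : IsMinNonzero S e)
    (α : ℤ × ℤ) (hα : (0 : ℤ × ℤ) ≤ α)
    (hfin : (Delta1 α ∩ S ∩ shiftSet S e).Finite)
    (δ : ℤ × ℤ) (hδ : δ ∈ Delta1 α ∩ S ∩ shiftSet S e)
    (hmax : ∀ x ∈ Delta1 α ∩ S ∩ shiftSet S e, x ≤ δ) :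
    Delta δ ∩ S ⊆ Ap S e := by
  obtain ⟨⟨hδΔ, hδS⟩, s, hsS, hδe⟩ := hδ
  obtain ⟨hδ1, hδ2⟩ := hδΔ
  rintro z ⟨hzΔ, hzS⟩
  refine ⟨hzS, fun hze => ?_⟩
  rcases hzΔ with ⟨hz1, hz2⟩ | ⟨hz1, hz2⟩
  · -- z ∈ Delta1 δ : z itself is a bigger element of the set
    have hmem : z ∈ Delta1 α ∩ S ∩ shiftSet S e := by
      refine ⟨⟨⟨by rw [hz1, hδ1], lt_trans hδ2 hz2⟩, hzS⟩, z - e, hze, by ring⟩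
    have := (hmax z hmem).2
    omega
  · -- z ∈ Delta2 δ : use g2_snd on s = δ - e and z - e
    have hs1 : s.1 = δ.1 - e.1 := by rw [hδe]; simp
    have hs2 : s.2 = δ.2 - e.2 := by rw [hδe]; simp
    obtain ⟨d, hdS, hd2, hd1⟩ := hS.g2_snd s hsS (z - e) hze (by simp [hs2, hz1])
      (by simp only [hs1, Prod.fst_sub]; omega)
    have hmin : min s.1 (z - e).1 = s.1 := by simp only [Prod.fst_sub]; omega
    rw [hmin] at hd1
    have hmem : e + d ∈ Delta1 α ∩ S ∩ shiftSet S e := by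
      refine ⟨⟨⟨?_, ?_⟩, hS.add_mem e he.1 d hdS⟩, d, hdS, rfl⟩
      · show e.1 + d.1 = α.1; omega
      · show α.2 < e.2 + d.2; omega
    have := (hmax _ hmem).2
    have : e.2 + d.2 ≤ δ.2 := this
    omega
end

section
/- Let S ⊆ ℕ² be a symmetric local good semigroup with γ = c − (1,1) where c is the conductor. If α ∈ S is an absolute element (i.e., Δ(α) ∩ S = ∅), then γ − α ∈ S and γ − α is also an absolute element of S. -/
/-- In a symmetric good semigroup, `α ↦ γ - α` sends absolute elements to
absolute elements. -/
theorem absolute_dual (S : Set (ℤ × ℤ)) (hS : GoodSemigroup S) (hloc : IsLocal S)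
    (c γ : ℤ × ℤ) (hc : IsConductor S c) (hγ : γ = c - (1, 1))
    (hsym : IsSymmetric S γ)
    (α : ℤ × ℤ) (habs : Absolute S α) :
    Absolute S (γ - α) := by
  obtain ⟨hαS, hΔα⟩ := habs
  refine ⟨?_, (hsym α).mp hαS⟩
  rw [hsym (γ - α), sub_sub_cancel]
  exact hΔα
end

section
/- Let S ⊆ ℕ² be a symmetric local good semigroup with minimal nonzero element e, conductor c, and γ = c − (1,1). Then for α ∈ S: α ∈ Ap(S) if and only if Δ(γ + e − α) ∩ S ≠ ∅. -/
/-- For `α ∈ S`: `α ∈ Ap(S)` iff `Δ(γ + e - α) ∩ S ≠ ∅`. -/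
theorem ap_iff_delta_nonempty (S : Set (ℤ × ℤ)) (hS : GoodSemigroup S) (hloc : IsLocal S)
    (e c γ : ℤ × ℤ) (he : IsMinNonzero S e) (hc : IsConductor S c)
    (hγ : γ = c - (1, 1)) (hsym : IsSymmetric S γ)
    (α : ℤ × ℤ) (hα : α ∈ S) :
    α ∈ Ap S e ↔ (Delta (γ + e - α) ∩ S).Nonempty := by
  have h := hsym (α - e)
  have hγeq : γ - (α - e) = γ + e - α := by ring
  rw [hγeq] at h
  constructor
  · rintro ⟨_, hne⟩
    rw [Set.nonempty_iff_ne_empty]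
    exact fun hemp => hne (h.mpr hemp)
  · intro hne
    exact ⟨hα, fun hmem => Set.not_nonempty_empty (h.mp hmem ▸ hne)⟩
end

section
/- Let S ⊆ ℕ² be a symmetric local good semigroup with minimal nonzero element e, conductor c, and γ = c − (1,1). If α ∈ Ap(S), then Δ(γ + e − α) ∩ S ⊆ Ap(S). -/
/-- If `α ∈ Ap(S)`, then `Δ(γ + e - α) ∩ S ⊆ Ap(S)`. -/
theorem delta_dual_subset_ap (S : Set (ℤ × ℤ)) (hS : GoodSemigroup S) (hloc : IsLocal S)
    (e c γ : ℤ × ℤ) (he : IsMinNonzero S e) (hc : IsConductor S c)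
    (hγ : γ = c - (1, 1)) (hsym : IsSymmetric S γ)
    (α : ℤ × ℤ) (hα : α ∈ Ap S e) :
    Delta (γ + e - α) ∩ S ⊆ Ap S e := by
  rintro β ⟨hβΔ, hβS⟩
  refine ⟨hβS, fun hmem => ?_⟩
  have hαS : α ∈ S := hα.1
  have hdisj := (hsym α).mp hαS
  have : β - e ∈ Delta (γ - α) ∩ S := by
    refine ⟨?_, hmem⟩
    rcases hβΔ with h | h
    · left
      constructor
      · have := h.1; simp [Prod.ext_iff] at *; omega
      · have := h.2; simp [Prod.ext_iff] at *; omega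
    · right
      constructor
      · have := h.1; simp [Prod.ext_iff] at *; omega
      · have := h.2; simp [Prod.ext_iff] at *; omega
  rw [hdisj] at this
  exact this
end

section
/- Let S ⊆ ℕ² be a symmetric local good semigroup with minimal nonzero element e, conductor c, γ = c − (1,1). For α ∈ ℕ²: if Δ(α) ∩ S ⊆ Ap(S) (possibly Δ(α) ∩ S is empty), then γ + e − α ∈ S. -/
/-- If `Δ(α) ∩ S ⊆ Ap(S)` (possibly empty), then `γ + e - α ∈ S`. -/
theorem dual_mem_of_delta_subset_ap (S : Set (ℤ × ℤ)) (hS : GoodSemigroup S)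
    (hloc : IsLocal S)
    (e c γ : ℤ × ℤ) (he : IsMinNonzero S e) (hc : IsConductor S c)
    (hγ : γ = c - (1, 1)) (hsym : IsSymmetric S γ)
    (α : ℤ × ℤ) (hα : (0 : ℤ × ℤ) ≤ α)
    (h : Delta α ∩ S ⊆ Ap S e) :
    γ + e - α ∈ S := by
  by_contra hmem
  have hne : Delta (γ - (γ + e - α)) ∩ S ≠ ∅ := fun h0 => hmem ((hsym _).mpr h0)
  have heq : γ - (γ + e - α) = α - e := by ring
  rw [heq] at hne
  obtain ⟨s, hsd, hsS⟩ := Set.nonempty_iff_ne_empty.mpr hne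
  have hseS : s + e ∈ S := hS.add_mem s hsS e he.1
  have hsed : s + e ∈ Delta α := by
    rcases hsd with ⟨h1, h2⟩ | ⟨h1, h2⟩
    · exact Or.inl ⟨by simpa using congrArg (· + e.1) h1,
        by have := h2; simp [Prod.lt_iff] at this ⊢ <;> omega⟩
    · exact Or.inr ⟨by simpa using congrArg (· + e.2) h1,
        by simp at h2 ⊢; omega⟩
  have hap := h ⟨hsed, hseS⟩
  exact hap.2 (by simpa using hsS)
end

section
/- Let S ⊆ ℕ² be a symmetric local good semigroup with minimal element e, conductor c, γ = c − (1,1), and let α ∈ Ap(S). Then for i ∈ {1,2}: Δᵢ(γ + e − α) ∩ S = ∅ if and only if Δᵢ(α) ∩ S ⊄ Ap(S) (i.e., Δᵢ(α) ∩ S contains an element of e + S). -/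
/-- For `α ∈ Ap(S)` and `i ∈ {1,2}`: `Δᵢ(γ + e - α) ∩ S = ∅` iff
`Δᵢ(α) ∩ S ⊄ Ap(S)`. -/
theorem delta_i_dual_empty_iff (S : Set (ℤ × ℤ)) (hS : GoodSemigroup S)
    (hloc : IsLocal S)
    (e c γ : ℤ × ℤ) (he : IsMinNonzero S e) (hc : IsConductor S c)
    (hγ : γ = c - (1, 1)) (hsym : IsSymmetric S γ)
    (α : ℤ × ℤ) (hα : α ∈ Ap S e) :
    (Delta1 (γ + e - α) ∩ S = ∅ ↔ ¬ (Delta1 α ∩ S ⊆ Ap S e)) ∧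
    (Delta2 (γ + e - α) ∩ S = ∅ ↔ ¬ (Delta2 α ∩ S ⊆ Ap S e)) := by
  obtain ⟨hαS, hαe⟩ := hα
  have heS := he.1
  constructor
  · -- Delta1 case
    constructor
    · -- forward
      intro h1 hsub
      have h1' := Set.eq_empty_iff_forall_notMem.mp h1
      -- Δ(γ+e−α) ∩ S nonempty since α - e ∉ S
      have hne : (Delta (γ + e - α) ∩ S).Nonempty := by
        rw [Set.nonempty_iff_ne_empty]
        intro hemp
        apply hαe
        apply (hsym (α - e)).mpr
        rw [show γ - (α - e) = γ + e - α by abel]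
        exact hemp
      obtain ⟨t, htΔ, htS⟩ := hne
      have ht2 : t ∈ Delta2 (γ + e - α) := by
        rcases htΔ with h | h
        · exact absurd (h1' t ⟨h, htS⟩) (by simp)
        · exact h
      obtain ⟨ht2a, ht2b⟩ := ht2
      simp only [Prod.fst_add, Prod.snd_add, Prod.fst_sub, Prod.snd_sub] at ht2a ht2b
      by_cases hσ : (Delta1 (α - e) ∩ S).Nonempty
      · obtain ⟨σ, hσΔ, hσS⟩ := hσ
        obtain ⟨hσ1, hσ2⟩ := hσΔ
        simp only [Prod.fst_sub, Prod.snd_sub] at hσ1 hσ2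
        have hδS : e + σ ∈ S := hS.add_mem e heS σ hσS
        have hmem : e + σ ∈ Delta1 α ∩ S := by
          refine ⟨⟨?_, ?_⟩, hδS⟩
          · simp only [Prod.fst_add]; omega
          · simp only [Prod.snd_add]; omega
        have hap := hsub hmem
        apply hap.2
        rw [show e + σ - e = σ by abel]
        exact hσS
      · have hΔe : Delta (α - e) ∩ S = ∅ := by
          rw [Set.eq_empty_iff_forall_notMem]
          rintro s ⟨hs, hsS⟩
          rcases hs with hs | hs
          · exact hσ ⟨s, hs, hsS⟩
          · obtain ⟨hs1, hs2⟩ := hs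
            simp only [Prod.fst_sub, Prod.snd_sub] at hs1 hs2
            have hts := Set.eq_empty_iff_forall_notMem.mp ((hsym t).mp htS)
            apply hts s
            refine ⟨Or.inr ⟨?_, ?_⟩, hsS⟩
            · simp only [Prod.snd_sub]; omega
            · simp only [Prod.fst_sub]; omega
        have hβS : γ + e - α ∈ S := by
          apply (hsym _).mpr
          rw [show γ - (γ + e - α) = α - e by abel]
          exact hΔe
        have hne1 : (γ + e - α).1 ≠ t.1 := by
          simp only [Prod.fst_add, Prod.fst_sub]; omega
        have heq2 : (γ + e - α).2 = t.2 := by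
          simp only [Prod.snd_add, Prod.snd_sub]; omega
        obtain ⟨d, hdS, hd2, hd1⟩ := hS.g2_snd _ hβS t htS heq2 hne1
        apply h1' d
        refine ⟨⟨?_, hd2⟩, hdS⟩
        rw [hd1]
        apply min_eq_left
        simp only [Prod.fst_add, Prod.fst_sub]
        omega
    · -- backward
      intro hnsub
      rw [Set.not_subset] at hnsub
      obtain ⟨δ, ⟨⟨hδ1, hδ2⟩, hδS⟩, hδnap⟩ := hnsub
      have hδe : δ - e ∈ S := by
        by_contra h
        exact hδnap ⟨hδS, h⟩
      have hemp := Set.eq_empty_iff_forall_notMem.mp ((hsym (δ - e)).mp hδe)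
      rw [Set.eq_empty_iff_forall_notMem]
      rintro t ⟨⟨ht1, ht2⟩, htS⟩
      simp only [Prod.fst_add, Prod.snd_add, Prod.fst_sub, Prod.snd_sub] at ht1 ht2
      apply hemp t
      refine ⟨Or.inl ⟨?_, ?_⟩, htS⟩
      · simp only [Prod.fst_sub]; omega
      · simp only [Prod.snd_sub]; omega
  · -- Delta2 case (mirror)
    constructor
    · intro h1 hsub
      have h1' := Set.eq_empty_iff_forall_notMem.mp h1
      have hne : (Delta (γ + e - α) ∩ S).Nonempty := by
        rw [Set.nonempty_iff_ne_empty]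
        intro hemp
        apply hαe
        apply (hsym (α - e)).mpr
        rw [show γ - (α - e) = γ + e - α by abel]
        exact hemp
      obtain ⟨t, htΔ, htS⟩ := hne
      have ht2 : t ∈ Delta1 (γ + e - α) := by
        rcases htΔ with h | h
        · exact h
        · exact absurd (h1' t ⟨h, htS⟩) (by simp)
      obtain ⟨ht2a, ht2b⟩ := ht2
      simp only [Prod.fst_add, Prod.snd_add, Prod.fst_sub, Prod.snd_sub] at ht2a ht2b
      by_cases hσ : (Delta2 (α - e) ∩ S).Nonempty
      · obtain ⟨σ, hσΔ, hσS⟩ := hσ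
        obtain ⟨hσ1, hσ2⟩ := hσΔ
        simp only [Prod.fst_sub, Prod.snd_sub] at hσ1 hσ2
        have hδS : e + σ ∈ S := hS.add_mem e heS σ hσS
        have hmem : e + σ ∈ Delta2 α ∩ S := by
          refine ⟨⟨?_, ?_⟩, hδS⟩
          · simp only [Prod.snd_add]; omega
          · simp only [Prod.fst_add]; omega
        have hap := hsub hmem
        apply hap.2
        rw [show e + σ - e = σ by abel]
        exact hσS
      · have hΔe : Delta (α - e) ∩ S = ∅ := by
          rw [Set.eq_empty_iff_forall_notMem]
          rintro s ⟨hs, hsS⟩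
          rcases hs with hs | hs
          · obtain ⟨hs1, hs2⟩ := hs
            simp only [Prod.fst_sub, Prod.snd_sub] at hs1 hs2
            have hts := Set.eq_empty_iff_forall_notMem.mp ((hsym t).mp htS)
            apply hts s
            refine ⟨Or.inl ⟨?_, ?_⟩, hsS⟩
            · simp only [Prod.fst_sub]; omega
            · simp only [Prod.snd_sub]; omega
          · exact hσ ⟨s, hs, hsS⟩
        have hβS : γ + e - α ∈ S := by
          apply (hsym _).mpr
          rw [show γ - (γ + e - α) = α - e by abel]
          exact hΔe
        have hne2 : (γ + e - α).2 ≠ t.2 := by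
          simp only [Prod.snd_add, Prod.snd_sub]; omega
        have heq1 : (γ + e - α).1 = t.1 := by
          simp only [Prod.fst_add, Prod.fst_sub]; omega
        obtain ⟨d, hdS, hd1, hd2⟩ := hS.g2_fst _ hβS t htS heq1 hne2
        apply h1' d
        refine ⟨⟨?_, hd1⟩, hdS⟩
        rw [hd2]
        apply min_eq_left
        simp only [Prod.snd_add, Prod.snd_sub]
        omega
    · intro hnsub
      rw [Set.not_subset] at hnsub
      obtain ⟨δ, ⟨⟨hδ1, hδ2⟩, hδS⟩, hδnap⟩ := hnsub
      have hδe : δ - e ∈ S := by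
        by_contra h
        exact hδnap ⟨hδS, h⟩
      have hemp := Set.eq_empty_iff_forall_notMem.mp ((hsym (δ - e)).mp hδe)
      rw [Set.eq_empty_iff_forall_notMem]
      rintro t ⟨⟨ht1, ht2⟩, htS⟩
      simp only [Prod.fst_add, Prod.snd_add, Prod.fst_sub, Prod.snd_sub] at ht1 ht2
      apply hemp t
      refine ⟨Or.inr ⟨?_, ?_⟩, htS⟩
      · simp only [Prod.snd_sub]; omega
      · simp only [Prod.fst_sub]; omega
end

section
/- Let S ⊆ ℕ² be a symmetric local good semigroup with conductor c, γ = c − (1,1), and first projection S₁ (a numerical semigroup). For n ∈ ℕ: the set {m ∈ ℕ : (n, m) ∈ S} is empty if and only if the set {m ∈ ℕ : (γ₁ − n, m) ∈ S} is infinite (equivalently, contains all m ≥ γ₂ + 1). -/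
/-- In a symmetric good semigroup, the column over `n` is empty iff the column
over `γ₁ - n` is infinite. -/
theorem column_empty_iff_dual_infinite (S : Set (ℤ × ℤ)) (hS : GoodSemigroup S)
    (hloc : IsLocal S)
    (c γ : ℤ × ℤ) (hc : IsConductor S c) (hγ : γ = c - (1, 1))
    (hsym : IsSymmetric S γ)
    (n : ℤ) (hn : 0 ≤ n) :
    {m : ℤ | 0 ≤ m ∧ (n, m) ∈ S} = ∅ ↔
      ({m : ℤ | (γ.1 - n, m) ∈ S}).Infinite := by
  constructor
  · intro hempty
    have key : Set.Ici (γ.2 + 1) ⊆ {m : ℤ | (γ.1 - n, m) ∈ S} := by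
      intro m hm
      have hm' : γ.2 + 1 ≤ m := hm
      have hdel : Delta (γ - (γ.1 - n, m)) ∩ S = ∅ := by
        ext d
        simp only [Set.mem_inter_iff, Set.mem_empty_iff_false, iff_false, not_and]
        intro hd hdS
        have hnn := hS.nonneg d hdS
        rcases hd with h1 | h2
        · have hd1 : d.1 = n := by
            have := h1.1
            simp only [Prod.fst_sub] at this
            omega
          have hmemn : (n, d.2) ∈ S := by
            have : ((n, d.2) : ℤ × ℤ) = d := by
              rw [← hd1]
            rw [this]; exact hdS
          have : d.2 ∈ ({m : ℤ | 0 ≤ m ∧ (n, m) ∈ S}) := ⟨hnn.2, hmemn⟩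
          rw [hempty] at this
          exact this
        · have hd2 : d.2 = γ.2 - m := by
            have := h2.1
            simp only [Prod.snd_sub] at this
            omega
          have := hnn.2
          omega
      exact (hsym _).2 hdel
    exact Set.Infinite.mono key (Set.Ici_infinite _)
  · intro hinf
    by_contra hne
    obtain ⟨m₀, hm0, hmem⟩ := Set.nonempty_iff_ne_empty.2 hne
    have hbound : {m : ℤ | (γ.1 - n, m) ∈ S} ⊆ Set.Icc 0 (γ.2 - m₀) := by
      intro t ht
      have hnn := hS.nonneg _ ht
      refine ⟨hnn.2, ?_⟩
      by_contra hgt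
      push_neg at hgt
      have hΔ := (hsym (n, m₀)).1 hmem
      have hcontra : ((γ.1 - n, t) : ℤ × ℤ) ∈ Delta (γ - (n, m₀)) ∩ S := by
        refine ⟨Or.inl ⟨by simp, ?_⟩, ht⟩
        simp only [Prod.snd_sub]
        omega
      rw [hΔ] at hcontra
      exact hcontra
    exact hinf ((Set.finite_Icc _ _).subset hbound)
end

section
/- Let S ⊆ ℕ² be a symmetric local good semigroup with conductor c and γ = c − (1,1). Then the map α ↦ γ − α is a bijection from the set of absolute elements of S to itself, and it is an involution. -/
/-- In a symmetric good semigroup, `α ↦ γ - α` is an involutive bijection of the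
set of absolute elements onto itself. -/
theorem absolute_bijection (S : Set (ℤ × ℤ)) (hS : GoodSemigroup S) (hloc : IsLocal S)
    (c γ : ℤ × ℤ) (hc : IsConductor S c) (hγ : γ = c - (1, 1))
    (hsym : IsSymmetric S γ) :
    Set.BijOn (fun a => γ - a) {a | Absolute S a} {a | Absolute S a} ∧
    ∀ a : ℤ × ℤ, γ - (γ - a) = a := by
  have hinv : ∀ a : ℤ × ℤ, γ - (γ - a) = a := fun a => by ring
  have hmaps : ∀ a, Absolute S a → Absolute S (γ - a) := by
    intro a ⟨haS, haD⟩
    constructor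
    · rw [hsym (γ - a), hinv]; exact haD
    · exact (hsym a).mp haS
  refine ⟨⟨fun a ha => hmaps a ha, ?_, ?_⟩, hinv⟩
  · intro a _ b _ h
    simpa using congrArg (fun x => γ - x) h
  · intro b hb
    exact ⟨γ - b, hmaps b hb, hinv b⟩
end

section
/- Let S ⊆ ℕ² be a local good semigroup with minimal nonzero element e = (e₁, e₂) and let S₁ be its first projection. For every n ∈ ℕ with n ≥ c₁ (first coordinate of the conductor), there exists exactly one m ∈ ℕ with m ≡ n (mod e₁) such that the vertical line {(m, r) : r ∈ ℕ} is eventually contained in Ap(S) (i.e., there is r₀ with (m, r) ∈ Ap(S) for all r ≥ r₀). -/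
section Aux

variable {S : Set (ℤ × ℤ)} {e c : ℤ × ℤ}

lemma aux_cond_nonneg (hS : GoodSemigroup S) (hc : IsConductor S c) :
    0 ≤ c.1 ∧ 0 ≤ c.2 := by
  have h1 := hS.nonneg (c.1, max c.2 0)
    (hc.1 _ (Prod.le_def.mpr ⟨le_rfl, le_max_left _ _⟩))
  have h2 := hS.nonneg (max c.1 0, c.2)
    (hc.1 _ (Prod.le_def.mpr ⟨le_max_left _ _, le_rfl⟩))
  exact ⟨h1.1, h2.2⟩

lemma aux_e_pos (hS : GoodSemigroup S) (hloc : IsLocal S) (he : IsMinNonzero S e) :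
    1 ≤ e.1 ∧ 1 ≤ e.2 := by
  obtain ⟨heS, hne, -⟩ := he
  have h0 := hS.nonneg e heS
  constructor
  · rcases eq_or_lt_of_le h0.1 with h | h
    · exact absurd (hloc e heS (Or.inl h.symm)) hne
    · linarith
  · rcases eq_or_lt_of_le h0.2 with h | h
    · exact absurd (hloc e heS (Or.inr h.symm)) hne
    · linarith

/-- Going down along a vertical line, staying above the conductor level. -/
lemma aux_down (hS : GoodSemigroup S) (hc : IsConductor S c) {x r r' : ℤ}
    (hx : ((x, r) : ℤ × ℤ) ∈ S) (h1 : c.2 ≤ r') (h2 : r' ≤ r) :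
    ((x, r') : ℤ × ℤ) ∈ S := by
  have hc0 := aux_cond_nonneg hS hc
  have hx0 : (0 : ℤ) ≤ x := (hS.nonneg _ hx).1
  have hb : ((x + c.1, r') : ℤ × ℤ) ∈ S :=
    hc.1 _ (Prod.le_def.mpr ⟨by simp; linarith, h1⟩)
  have h := hS.inf_mem _ hx _ hb
  simpa [min_eq_left (show x ≤ x + c.1 by linarith), min_eq_right h2] using h

/-- Going up one step along a vertical line, above the conductor level. -/
lemma aux_up1 (hS : GoodSemigroup S) (hc : IsConductor S c) {x r : ℤ}
    (hx : ((x, r) : ℤ × ℤ) ∈ S) (hr : c.2 ≤ r) :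
    ((x, r + 1) : ℤ × ℤ) ∈ S := by
  have hc0 := aux_cond_nonneg hS hc
  have hx0 : (0 : ℤ) ≤ x := (hS.nonneg _ hx).1
  have hb : ((x + c.1 + 1, r) : ℤ × ℤ) ∈ S :=
    hc.1 _ (Prod.le_def.mpr ⟨by simp; linarith, hr⟩)
  obtain ⟨d, hd, hd2, hd1⟩ := hS.g2_snd (x, r) hx _ hb rfl (by simp; linarith)
  simp only [Prod.fst, Prod.snd] at hd1 hd2
  have hmin : d.1 = x := by
    rw [hd1]; exact min_eq_left (by linarith)
  have hb2 : ((x + c.1, r + 1) : ℤ × ℤ) ∈ S :=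
    hc.1 _ (Prod.le_def.mpr ⟨by simp; linarith, by simp; linarith⟩)
  have h := hS.inf_mem d hd _ hb2
  simp only [Prod.fst, Prod.snd, hmin] at h
  rwa [min_eq_left (by linarith), min_eq_right (by linarith)] at h

/-- A single point at level ≥ c₂ gives the full vertical ray. -/
lemma aux_ray (hS : GoodSemigroup S) (hc : IsConductor S c) {x r : ℤ}
    (hx : ((x, r) : ℤ × ℤ) ∈ S) (hr : c.2 ≤ r) :
    ∀ r', c.2 ≤ r' → ((x, r') : ℤ × ℤ) ∈ S := by
  intro r' hr'
  rcases le_total r' r with h | h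
  · exact aux_down hS hc hx hr' h
  · have key : ∀ k : ℕ, ((x, r + k) : ℤ × ℤ) ∈ S := by
      intro k
      induction k with
      | zero => simpa using hx
      | succ k ih =>
          have := aux_up1 hS hc ih (by linarith)
          convert this using 2
          push_cast; ring
    have := key (r' - r).toNat
    rwa [Int.toNat_of_nonneg (by linarith), show r + (r' - r) = r' by ring] at this

end Aux

/-- For every `n ≥ c₁` there is exactly one `m ≡ n (mod e₁)` whose vertical line
is eventually contained in `Ap(S)`. -/
theorem unique_vertical_line_mod (S : Set (ℤ × ℤ)) (hS : GoodSemigroup S)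
    (hloc : IsLocal S)
    (e c : ℤ × ℤ) (he : IsMinNonzero S e) (hc : IsConductor S c) :
    ∀ n : ℤ, c.1 ≤ n →
      ∃! m : ℤ, 0 ≤ m ∧ m ≡ n [ZMOD e.1] ∧
        ∃ r₀ : ℤ, ∀ r : ℤ, r₀ ≤ r → ((m, r) : ℤ × ℤ) ∈ Ap S e := by
  intro n hn
  obtain ⟨he1, he2⟩ := aux_e_pos hS hloc he
  obtain ⟨hc1, hc2⟩ := aux_cond_nonneg hS hc
  -- the predicate "the vertical line at x is eventually in S"
  set D : ℤ → Prop := fun x => ∀ r, c.2 ≤ r → ((x, r) : ℤ × ℤ) ∈ S with hD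
  have D_nonneg : ∀ x, D x → 0 ≤ x := fun x h => (hS.nonneg _ (h c.2 le_rfl)).1
  have D_add : ∀ x, D x → D (x + e.1) := by
    intro x hx
    have hmem : ((x + e.1, c.2 + e.2) : ℤ × ℤ) ∈ S := by
      have := hS.add_mem e he.1 (x, c.2) (hx c.2 le_rfl)
      have heq : e + ((x, c.2) : ℤ × ℤ) = ((x + e.1, c.2 + e.2) : ℤ × ℤ) := by
        ext <;> simp [add_comm]
      rwa [heq] at this
    exact aux_ray hS hc hmem (by linarith)
  have D_addn : ∀ (k : ℕ) (x : ℤ), D x → D (x + k * e.1) := by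
    intro k
    induction k with
    | zero => intro x hx; simpa using hx
    | succ k ih =>
        intro x hx
        have := D_add _ (ih x hx)
        have heq : x + (k : ℤ) * e.1 + e.1 = x + ((k : ℕ) + 1 : ℕ) * e.1 := by
          push_cast; ring
        rwa [heq] at this
  -- characterization of "eventually in Ap S e"
  have hchar : ∀ m : ℤ,
      (∃ r₀ : ℤ, ∀ r : ℤ, r₀ ≤ r → ((m, r) : ℤ × ℤ) ∈ Ap S e) ↔
      (D m ∧ ¬ D (m - e.1)) := by
    intro m
    constructor
    · rintro ⟨r₀, h⟩
      have hR : r₀ ≤ max r₀ (c.2 + e.2) := le_max_left _ _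
      have hApR := h _ hR
      obtain ⟨hmem, hnot⟩ := hApR
      constructor
      · exact aux_ray hS hc hmem (le_trans (by linarith) (le_max_right _ _))
      · intro hDm
        apply hnot
        have : ((m, max r₀ (c.2 + e.2)) : ℤ × ℤ) - e
            = ((m - e.1, max r₀ (c.2 + e.2) - e.2) : ℤ × ℤ) := rfl
        rw [this]
        exact hDm _ (by have := le_max_right r₀ (c.2 + e.2); linarith)
    · rintro ⟨hDm, hnD⟩
      refine ⟨c.2 + e.2, fun r hr => ⟨hDm r (by linarith), ?_⟩⟩
      intro hmem
      have : ((m, r) : ℤ × ℤ) - e = ((m - e.1, r - e.2) : ℤ × ℤ) := rfl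
      rw [this] at hmem
      exact hnD (aux_ray hS hc hmem (by linarith))
  -- comparison lemma for uniqueness
  have hcomp : ∀ a b : ℤ, D a → ¬ D (b - e.1) → e.1 ∣ b - a → b ≤ a := by
    intro a b hda hnb ⟨j, hj⟩
    by_contra hab
    push_neg at hab
    have hj1 : 1 ≤ j := by
      by_contra hj0
      push_neg at hj0
      have : e.1 * j ≤ 0 := mul_nonpos_of_nonneg_of_nonpos (by linarith) (by linarith)
      linarith
    have hD' := D_addn (j - 1).toNat a hda
    have hcast : ((j - 1).toNat : ℤ) = j - 1 := Int.toNat_of_nonneg (by linarith)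
    rw [hcast] at hD'
    have heq : a + (j - 1) * e.1 = b - e.1 := by nlinarith [hj]
    rw [heq] at hD'
    exact hnb hD'
  -- existence: take the greatest k with D (n - k * e.1)
  classical
  set P : ℕ → Prop := fun k => D (n - (k : ℤ) * e.1) with hP
  have hP0 : P 0 := by
    intro r hr
    exact hc.1 _ (Prod.le_def.mpr ⟨by simpa using hn, hr⟩)
  have hn0 : 0 ≤ n := le_trans hc1 hn
  set k : ℕ := Nat.findGreatest P n.toNat with hk
  have hPk : P k := Nat.findGreatest_spec (Nat.zero_le _) hP0
  have hPk1 : ¬ P (k + 1) := by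
    by_cases hle : k + 1 ≤ n.toNat
    · exact Nat.findGreatest_is_greatest (Nat.lt_succ_self k) hle
    · intro hcontra
      push_neg at hle
      have hkn : (n.toNat : ℤ) ≤ (k : ℤ) := by exact_mod_cast Nat.lt_succ_iff.mp hle
      rw [Int.toNat_of_nonneg hn0] at hkn
      have h0 := D_nonneg _ hcontra
      have : ((k : ℤ) + 1) * e.1 ≥ (k : ℤ) + 1 := by nlinarith [Int.natCast_nonneg k]
      push_cast at h0
      linarith
  refine ⟨n - (k : ℤ) * e.1, ⟨D_nonneg _ hPk, ?_, ?_⟩, ?_⟩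
  · exact Int.modEq_iff_dvd.mpr ⟨k, by ring⟩
  · refine (hchar _).mpr ⟨hPk, ?_⟩
    intro hcontra
    apply hPk1
    have heq : n - ((k : ℕ) + 1 : ℕ) * e.1 = n - (k : ℤ) * e.1 - e.1 := by
      push_cast; ring
    show D (n - ((k : ℕ) + 1 : ℕ) * e.1)
    rwa [heq]
  · rintro y ⟨hy0, hymod, hyline⟩
    obtain ⟨hDy, hnDy⟩ := (hchar y).mp hyline
    have hDm : D (n - (k : ℤ) * e.1) := hPk
    have hnDm : ¬ D (n - (k : ℤ) * e.1 - e.1) := by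
      intro hcontra
      apply hPk1
      have heq : n - ((k : ℕ) + 1 : ℕ) * e.1 = n - (k : ℤ) * e.1 - e.1 := by
        push_cast; ring
      show D (n - ((k : ℕ) + 1 : ℕ) * e.1)
      rwa [heq]
    have hmmod : (n - (k : ℤ) * e.1) ≡ n [ZMOD e.1] := Int.modEq_iff_dvd.mpr ⟨k, by ring⟩
    have hd1 : e.1 ∣ (n - (k : ℤ) * e.1) - y := (hymod.trans hmmod.symm).dvd
    have hd2 : e.1 ∣ y - (n - (k : ℤ) * e.1) := (hmmod.trans hymod.symm).dvd
    exact le_antisymm (hcomp _ _ hDm hnDy hd2) (hcomp _ _ hDy hnDm hd1)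
end

section
/- Let S ⊆ ℕ² be a symmetric local good semigroup with first and second projections S₁, S₂ (numerical semigroups), conductor c, γ = c − (1,1). Then n(S₁) − b(S₁) = n(S₂) − b(S₂), where n(Sᵢ) = |Sᵢ ∩ {0, 1, …, γᵢ}| and b(Sᵢ) = |ℕ \ Sᵢ|; moreover this common value equals the number of absolute elements of S. -/
section Aux

lemma delta_swap (b d : ℤ × ℤ) : (d.2, d.1) ∈ Delta (b.2, b.1) ↔ d ∈ Delta b := by
  simp only [Delta, Delta1, Delta2, Set.mem_union, Set.mem_setOf_eq]
  tauto

/-- Main counting lemma, for the first coordinate. -/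
theorem main_count (S : Set (ℤ × ℤ)) (hS : GoodSemigroup S) (hloc : IsLocal S)
    (c γ : ℤ × ℤ) (hc : ∀ z : ℤ × ℤ, c ≤ z → z ∈ S) (hγ : γ = c - (1, 1))
    (hsym : IsSymmetric S γ) :
    (({x : ℤ | x ∈ Prod.fst '' S ∧ 0 ≤ x ∧ x ≤ γ.1}.ncard : ℤ) -
        {x : ℤ | 0 ≤ x ∧ x ∉ Prod.fst '' S}.ncard =
      ({a : ℤ × ℤ | Absolute S a}.ncard : ℤ)) := by
  classical
  have hγ1 : γ.1 = c.1 - 1 := by rw [hγ]; rfl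
  have hγ2 : γ.2 = c.2 - 1 := by rw [hγ]; rfl
  -- c ≥ (1,1)
  have hc1 : 1 ≤ c.1 := by
    by_contra h
    push_neg at h
    have hz : c ≤ ((0, max c.2 1) : ℤ × ℤ) := ⟨by simpa using by omega, by simp⟩
    have hmem := hc _ hz
    have := hloc _ hmem (Or.inl rfl)
    rw [Prod.ext_iff] at this
    simp at this
    omega
  have hc2 : 1 ≤ c.2 := by
    by_contra h
    push_neg at h
    have hz : c ≤ ((max c.1 1, 0) : ℤ × ℤ) := ⟨by simp, by simpa using by omega⟩
    have hmem := hc _ hz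
    have := hloc _ hmem (Or.inr rfl)
    rw [Prod.ext_iff] at this
    simp at this
    omega
  set S₁ := Prod.fst '' S with hS₁def
  have hS₁nonneg : ∀ x : ℤ, x ∈ S₁ → 0 ≤ x := by
    rintro x ⟨p, hp, rfl⟩
    exact (hS.nonneg p hp).1
  have hbig : ∀ x : ℤ, γ.1 < x → x ∈ S₁ := by
    intro x hx
    exact ⟨(x, c.2), hc _ ⟨by omega, le_refl _⟩, rfl⟩
  -- the key symmetry lemma on high columns
  have hL : ∀ x y : ℤ, γ.2 < y → ((x, y) ∈ S ↔ (γ.1 - x) ∉ S₁) := by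
    intro x y hy
    rw [hsym (x, y)]
    have hsub : γ - ((x, y) : ℤ × ℤ) = (γ.1 - x, γ.2 - y) := rfl
    rw [hsub]
    constructor
    · intro hemp hmem
      obtain ⟨p, hp, hpx⟩ := hmem
      have hpD : p ∈ Delta ((γ.1 - x, γ.2 - y) : ℤ × ℤ) ∩ S := by
        refine ⟨Or.inl ⟨hpx, ?_⟩, hp⟩
        have := (hS.nonneg p hp).2
        simp only
        omega
      rw [hemp] at hpD
      exact hpD
    · intro hnot
      ext d
      simp only [Set.mem_inter_iff, Set.mem_empty_iff_false, iff_false]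
      rintro ⟨hd, hdS⟩
      rcases hd with ⟨h1, _⟩ | ⟨h1, _⟩
      · exact hnot ⟨d, hdS, h1⟩
      · have := (hS.nonneg d hdS).2
        simp only at h1
        omega
  -- absolute elements are ≤ γ
  have habs_le : ∀ a : ℤ × ℤ, Absolute S a → a.1 ≤ γ.1 ∧ a.2 ≤ γ.2 := by
    rintro a ⟨haS, hΔ⟩
    constructor
    · by_contra h
      push_neg at h
      have hp : ((a.1, max (a.2 + 1) c.2) : ℤ × ℤ) ∈ S := hc _ ⟨by omega, le_max_right _ _⟩
      have : ((a.1, max (a.2 + 1) c.2) : ℤ × ℤ) ∈ Delta a ∩ S :=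
        ⟨Or.inl ⟨rfl, by simp only; omega⟩, hp⟩
      rw [hΔ] at this
      exact this
    · by_contra h
      push_neg at h
      have hp : ((max (a.1 + 1) c.1, a.2) : ℤ × ℤ) ∈ S := hc _ ⟨le_max_right _ _, by omega⟩
      have : ((max (a.1 + 1) c.1, a.2) : ℤ × ℤ) ∈ Delta a ∩ S :=
        ⟨Or.inr ⟨rfl, by simp only; omega⟩, hp⟩
      rw [hΔ] at this
      exact this
  set A := {x : ℤ | x ∈ S₁ ∧ 0 ≤ x ∧ x ≤ γ.1} with hA
  set G := {x : ℤ | 0 ≤ x ∧ x ∉ S₁} with hG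
  set U := {x : ℤ | 0 ≤ x ∧ x ≤ γ.1 ∧ (γ.1 - x) ∉ S₁} with hU
  set Cs := {x : ℤ | 0 ≤ x ∧ x ≤ γ.1 ∧ x ∈ S₁ ∧ (γ.1 - x) ∈ S₁} with hCs
  set Abs := {a : ℤ × ℤ | Absolute S a} with hAbs
  -- U is the reflected image of G
  have hGU : U = (fun x : ℤ => γ.1 - x) '' G := by
    ext x
    simp only [hU, hG, Set.mem_image, Set.mem_setOf_eq]
    constructor
    · rintro ⟨h0, h1, h2⟩
      exact ⟨γ.1 - x, ⟨by omega, h2⟩, by omega⟩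
    · rintro ⟨y, ⟨hy0, hyS⟩, rfl⟩
      have hyγ : y ≤ γ.1 := by
        by_contra h
        exact hyS (hbig y (by omega))
      refine ⟨by omega, by omega, ?_⟩
      simpa [show γ.1 - (γ.1 - y) = y by ring] using hyS
  -- A is the disjoint union of Cs and U
  have hUA : U ⊆ A := by
    rintro x ⟨h0, h1, h2⟩
    refine ⟨⟨(x, γ.2 + 1), (hL x (γ.2 + 1) (by omega)).2 h2, rfl⟩, h0, h1⟩
  have hAU : A = Cs ∪ U := by
    ext x
    constructor
    · rintro ⟨hx, h0, h1⟩
      by_cases h : (γ.1 - x) ∈ S₁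
      · exact Or.inl ⟨h0, h1, hx, h⟩
      · exact Or.inr ⟨h0, h1, h⟩
    · rintro (⟨h0, h1, h2, _⟩ | hx)
      · exact ⟨h2, h0, h1⟩
      · exact hUA hx
  have hdisj : Disjoint Cs U := by
    rw [Set.disjoint_left]
    rintro x ⟨_, _, _, h3⟩ ⟨_, _, h3'⟩
    exact h3' h3
  -- finiteness
  have hIccfin : (Set.Icc (0:ℤ) γ.1).Finite := Set.finite_Icc _ _
  have hAfin : A.Finite := hIccfin.subset (fun x hx => ⟨hx.2.1, hx.2.2⟩)
  have hCfin : Cs.Finite := hIccfin.subset (fun x hx => ⟨hx.1, hx.2.1⟩)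
  have hUfin : U.Finite := hIccfin.subset (fun x hx => ⟨hx.1, hx.2.1⟩)
  have hGfin : G.Finite := by
    apply hIccfin.subset
    rintro x ⟨h0, hxS⟩
    refine ⟨h0, ?_⟩
    by_contra h
    exact hxS (hbig x (by omega))
  -- image of Abs under fst is Cs
  have hIm : Prod.fst '' Abs = Cs := by
    ext x
    constructor
    · rintro ⟨a, ha, rfl⟩
      obtain ⟨haS, hΔ⟩ := ha
      obtain ⟨hle1, hle2⟩ := habs_le a ⟨haS, hΔ⟩
      refine ⟨(hS.nonneg a haS).1, hle1, ⟨a, haS, rfl⟩, ?_⟩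
      by_contra h
      have hup : ((a.1, γ.2 + 1) : ℤ × ℤ) ∈ S := (hL a.1 (γ.2 + 1) (by omega)).2 h
      have : ((a.1, γ.2 + 1) : ℤ × ℤ) ∈ Delta a ∩ S :=
        ⟨Or.inl ⟨rfl, by simp only; omega⟩, hup⟩
      rw [hΔ] at this
      exact this
    · rintro ⟨h0, h1, ⟨p, hpS, hpx⟩, h3⟩
      -- the column over x is nonempty and bounded by γ.2
      have hbdd : ∀ y : ℤ, (x, y) ∈ S → y ≤ γ.2 := by
        intro y hy
        by_contra hgt
        push_neg at hgt
        exact ((hL x y hgt).1 hy) h3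
      have hcol : (x, p.2) ∈ S := by
        have : ((x : ℤ), p.2) = p := Prod.ext hpx.symm rfl
        rw [this]; exact hpS
      obtain ⟨m, hmS, hmax⟩ := Int.exists_greatest_of_bdd
        (P := fun y => ((x, y) : ℤ × ℤ) ∈ S) ⟨γ.2, hbdd⟩ ⟨p.2, hcol⟩
      refine ⟨(x, m), ⟨hmS, ?_⟩, rfl⟩
      ext d
      simp only [Set.mem_inter_iff, Set.mem_empty_iff_false, iff_false]
      rintro ⟨hd, hdS⟩
      rcases hd with ⟨h1', h2'⟩ | ⟨h1', h2'⟩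
      · -- d is strictly above (x,m) in the same column
        have hdcol : ((x : ℤ), d.2) ∈ S := by
          have : ((x : ℤ), d.2) = d := Prod.ext h1'.symm rfl
          rw [this]; exact hdS
        have := hmax d.2 hdcol
        simp only at h2'
        omega
      · -- d is strictly to the right of (x,m) on the same row
        obtain ⟨d', hd'S, hd'2, hd'1⟩ :=
          hS.g2_snd (x, m) hmS d hdS (by simp only; exact h1'.symm)
            (by simp only; intro h; simp only at h2'; omega)
        have hminx : min ((x, m) : ℤ × ℤ).1 d.1 = x := by
          simp only
          exact min_eq_left (le_of_lt h2')
        rw [hminx] at hd'1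
        have hdcol : ((x : ℤ), d'.2) ∈ S := by
          have : ((x : ℤ), d'.2) = d' := Prod.ext hd'1.symm rfl
          rw [this]; exact hd'S
        have := hmax d'.2 hdcol
        simp only at hd'2
        omega
  -- fst is injective on Abs
  have hInj : Set.InjOn Prod.fst Abs := by
    rintro a ⟨haS, haΔ⟩ b ⟨hbS, hbΔ⟩ hab
    by_contra hne
    have hne2 : a.2 ≠ b.2 := by
      intro h
      exact hne (Prod.ext hab h)
    obtain ⟨d, hdS, hd1, hd2⟩ := hS.g2_fst a haS b hbS hab hne2
    rcases le_total a.2 b.2 with h | h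
    · have : d ∈ Delta a ∩ S := ⟨Or.inr ⟨by omega, hd1⟩, hdS⟩
      rw [haΔ] at this
      exact this
    · have : d ∈ Delta b ∩ S := ⟨Or.inr ⟨by omega, by omega⟩, hdS⟩
      rw [hbΔ] at this
      exact this
  have hAbsfin : Abs.Finite := by
    have : (Prod.fst '' Abs).Finite := hIm ▸ hCfin
    exact Set.Finite.of_finite_image this hInj
  -- counting
  have h1 : A.ncard = Cs.ncard + U.ncard := by
    rw [hAU]
    exact Set.ncard_union_eq hdisj hCfin hUfin
  have h2 : U.ncard = G.ncard := by
    rw [hGU]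
    exact Set.ncard_image_of_injective _ (fun a b h => by omega)
  have h3 : Abs.ncard = Cs.ncard := by
    rw [← hIm, Set.ncard_image_of_injOn hInj]
  omega

end Aux

/-- For a symmetric good semigroup, `n(S₁) - b(S₁) = n(S₂) - b(S₂)`, and this
common value is the number of absolute elements of `S`. -/
theorem count_absolute (S : Set (ℤ × ℤ)) (hS : GoodSemigroup S) (hloc : IsLocal S)
    (c γ : ℤ × ℤ) (hc : IsConductor S c) (hγ : γ = c - (1, 1))
    (hsym : IsSymmetric S γ) :
    (({x : ℤ | x ∈ Prod.fst '' S ∧ 0 ≤ x ∧ x ≤ γ.1}.ncard : ℤ) -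
        {x : ℤ | 0 ≤ x ∧ x ∉ Prod.fst '' S}.ncard =
      ({x : ℤ | x ∈ Prod.snd '' S ∧ 0 ≤ x ∧ x ≤ γ.2}.ncard : ℤ) -
        {x : ℤ | 0 ≤ x ∧ x ∉ Prod.snd '' S}.ncard) ∧
    (({x : ℤ | x ∈ Prod.fst '' S ∧ 0 ≤ x ∧ x ≤ γ.1}.ncard : ℤ) -
        {x : ℤ | 0 ≤ x ∧ x ∉ Prod.fst '' S}.ncard =
      ({a : ℤ × ℤ | Absolute S a}.ncard : ℤ)) := by
  have H1 := main_count S hS hloc c γ hc.1 hγ hsym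
  -- the swapped semigroup
  set T : Set (ℤ × ℤ) := (fun p : ℤ × ℤ => (p.2, p.1)) '' S with hTdef
  have hmemT : ∀ p : ℤ × ℤ, p ∈ T ↔ (p.2, p.1) ∈ S := by
    intro p
    constructor
    · rintro ⟨q, hq, rfl⟩; simpa using hq
    · intro h; exact ⟨(p.2, p.1), h, rfl⟩
  have hST : GoodSemigroup T := by
    constructor
    · intro p hp
      have := hS.nonneg _ ((hmemT p).1 hp)
      exact ⟨this.2, this.1⟩
    · exact (hmemT _).2 hS.zero_mem
    · intro a ha b hb
      refine (hmemT _).2 ?_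
      have := hS.add_mem _ ((hmemT a).1 ha) _ ((hmemT b).1 hb)
      simpa using this
    · intro a ha b hb
      refine (hmemT _).2 ?_
      have := hS.inf_mem _ ((hmemT a).1 ha) _ ((hmemT b).1 hb)
      simpa using this
    · intro a ha b hb h1 h2
      obtain ⟨d, hd, hd2, hd1⟩ := hS.g2_snd _ ((hmemT a).1 ha) _ ((hmemT b).1 hb)
        (by simpa using h1) (by simpa using h2)
      exact ⟨(d.2, d.1), (hmemT _).2 (by simpa using hd), by simpa using hd2,
        by simpa using hd1⟩
    · intro a ha b hb h1 h2
      obtain ⟨d, hd, hd2, hd1⟩ := hS.g2_fst _ ((hmemT a).1 ha) _ ((hmemT b).1 hb)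
        (by simpa using h1) (by simpa using h2)
      exact ⟨(d.2, d.1), (hmemT _).2 (by simpa using hd), by simpa using hd2,
        by simpa using hd1⟩
    · exact ⟨(c.2, c.1), fun z hz => (hmemT _).2 (hc.1 _ ⟨hz.2, hz.1⟩)⟩
  have hlocT : IsLocal T := by
    intro p hp h0
    have h0' : ((p.2, p.1) : ℤ × ℤ).1 = 0 ∨ ((p.2, p.1) : ℤ × ℤ).2 = 0 := by
      simpa [or_comm] using h0
    have := hloc _ ((hmemT p).1 hp) h0'
    rw [Prod.ext_iff] at this ⊢
    exact ⟨this.2, this.1⟩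
  have hcT : ∀ z : ℤ × ℤ, ((c.2, c.1) : ℤ × ℤ) ≤ z → z ∈ T := by
    intro z hz
    exact (hmemT _).2 (hc.1 _ ⟨hz.2, hz.1⟩)
  have hγT : ((γ.2, γ.1) : ℤ × ℤ) = ((c.2, c.1) : ℤ × ℤ) - (1, 1) := by
    rw [Prod.ext_iff]
    constructor
    · show γ.2 = c.2 - 1
      rw [hγ]; rfl
    · show γ.1 = c.1 - 1
      rw [hγ]; rfl
  have hDeltaT : ∀ b : ℤ × ℤ, (Delta (b.2, b.1) ∩ T = ∅ ↔ Delta b ∩ S = ∅) := by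
    intro b
    simp only [Set.eq_empty_iff_forall_notMem, Set.mem_inter_iff, not_and]
    constructor
    · intro h d hd hdS
      exact h (d.2, d.1) ((delta_swap b d).2 hd) ((hmemT _).2 (by simpa using hdS))
    · intro h d hd hdT
      have h2 : (d.2, d.1) ∈ Delta b := by
        have := (delta_swap b (d.2, d.1)).1 (by simpa using hd)
        exact this
      exact h _ h2 ((hmemT d).1 hdT)
  have hsymT : IsSymmetric T (γ.2, γ.1) := by
    intro a
    rw [hmemT a, hsym (a.2, a.1)]
    have hkey := hDeltaT (γ - (a.2, a.1))
    have heq : (((γ - ((a.2, a.1) : ℤ × ℤ)).2, (γ - ((a.2, a.1) : ℤ × ℤ)).1) : ℤ × ℤ)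
        = ((γ.2, γ.1) : ℤ × ℤ) - a := by
      rfl
    rw [heq] at hkey
    exact hkey.symm
  have H2 := main_count T hST hlocT (c.2, c.1) (γ.2, γ.1) hcT hγT hsymT
  -- translate the statement about T back to S
  have hproj : Prod.fst '' T = Prod.snd '' S := by
    ext x
    constructor
    · rintro ⟨p, hpT, rfl⟩
      exact ⟨(p.2, p.1), (hmemT p).1 hpT, rfl⟩
    · rintro ⟨p, hpS, rfl⟩
      exact ⟨(p.2, p.1), (hmemT _).2 (by simpa using hpS), rfl⟩
  have hAbsEq : {a : ℤ × ℤ | Absolute T a} = (fun p : ℤ × ℤ => (p.2, p.1)) '' {a : ℤ × ℤ | Absolute S a} := by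
    ext a
    simp only [Set.mem_setOf_eq, Set.mem_image]
    constructor
    · rintro ⟨haT, hΔ⟩
      refine ⟨(a.2, a.1), ⟨(hmemT a).1 haT, ?_⟩, by simp⟩
      have := (hDeltaT (a.2, a.1)).1 (by simpa using hΔ)
      simpa using this
    · rintro ⟨p, ⟨hpS, hΔp⟩, rfl⟩
      refine ⟨(hmemT _).2 (by simpa using hpS), ?_⟩
      exact (hDeltaT p).2 hΔp
  have hAbsCard : {a : ℤ × ℤ | Absolute T a}.ncard = {a : ℤ × ℤ | Absolute S a}.ncard := by
    rw [hAbsEq]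
    exact Set.ncard_image_of_injective _ (fun p q h => by
      rw [Prod.ext_iff] at h ⊢
      exact ⟨h.2, h.1⟩)
  rw [hproj] at H2
  rw [hAbsCard] at H2
  have H2' : (({x : ℤ | x ∈ Prod.snd '' S ∧ 0 ≤ x ∧ x ≤ γ.2}.ncard : ℤ) -
        {x : ℤ | 0 ≤ x ∧ x ∉ Prod.snd '' S}.ncard =
      ({a : ℤ × ℤ | Absolute S a}.ncard : ℤ)) := H2
  exact ⟨H1.trans H2'.symm, H1⟩
end
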